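/- Let h : ℝ^d → ℝ be convex with proximal mapping prox_h, and let g(v) = ⟨c, v⟩ + (1/(2t))‖v‖² + h(x + v) for fixed c, x ∈ ℝ^d and t > 0. Then v* ∈ ℝ^d minimizes g over a subspace T with associated constraint A(v) = 0 (where T = ker A, A linear surjective onto its range) if and only if there exists a Lagrange multiplier Λ with v* = prox_{th}(x − t(c − A*(Λ))) − x and A(v*) = 0. -/

import Mathlib

section KKTAux
open scoped RealInnerProductSpace

variable {E F : Type*} [NormedAddCommGroup E] [InnerProductSpace ℝ E]
  [NormedAddCommGroup F] [InnerProductSpace ℝ F]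

/-- convexity of norm squared -/
lemma kkt_normsq_convex (a b : ℝ) (ha : 0 ≤ a) (hb : 0 ≤ b) (hab : a + b = 1)
    (w1 w2 : E) : ‖a • w1 + b • w2‖ ^ 2 ≤ a * ‖w1‖ ^ 2 + b * ‖w2‖ ^ 2 := by
  have h1 : ‖a • w1 + b • w2‖ ≤ a * ‖w1‖ + b * ‖w2‖ := by
    calc ‖a • w1 + b • w2‖ ≤ ‖a • w1‖ + ‖b • w2‖ := norm_add_le _ _
    _ = a * ‖w1‖ + b * ‖w2‖ := by rw [norm_smul, norm_smul, Real.norm_of_nonneg ha,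
        Real.norm_of_nonneg hb]
  have h0 : 0 ≤ ‖a • w1 + b • w2‖ := norm_nonneg _
  have h2 : ‖a • w1 + b • w2‖ ^ 2 ≤ (a * ‖w1‖ + b * ‖w2‖) ^ 2 :=
    pow_le_pow_left₀ h0 h1 2
  nlinarith [mul_nonneg (mul_nonneg ha hb) (sq_nonneg (‖w1‖ - ‖w2‖))]

/-- uniqueness of the prox minimizer -/
lemma kkt_uniq (t : ℝ) (ht : 0 < t) (h : E → ℝ) (hh : ConvexOn ℝ Set.univ h)
    (y u1 u2 : E)
    (h1 : ∀ z, (1 / 2) * ‖u1 - y‖ ^ 2 + t * h u1 ≤ (1 / 2) * ‖z - y‖ ^ 2 + t * h z)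
    (h2 : ∀ z, (1 / 2) * ‖u2 - y‖ ^ 2 + t * h u2 ≤ (1 / 2) * ‖z - y‖ ^ 2 + t * h z) :
    u1 = u2 := by
  set m := (1/2 : ℝ) • u1 + (1/2 : ℝ) • u2 with hm
  have e1 : m - y = (1/2 : ℝ) • (u1 - y) + (1/2 : ℝ) • (u2 - y) := by
    rw [hm]; module
  have e2 : u1 - u2 = (u1 - y) - (u2 - y) := by abel
  have hA : ‖m - y‖ ^ 2 = (1/4) * ‖u1 - y‖ ^ 2 + (1/2) * ⟪u1 - y, u2 - y⟫
      + (1/4) * ‖u2 - y‖ ^ 2 := by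
    rw [e1, norm_add_sq_real, real_inner_smul_left, real_inner_smul_right,
      norm_smul, norm_smul]
    simp only [Real.norm_eq_abs]
    rw [abs_of_nonneg (by norm_num : (0:ℝ) ≤ 1/2)]
    ring
  have hB : ‖u1 - u2‖ ^ 2 = ‖u1 - y‖ ^ 2 - 2 * ⟪u1 - y, u2 - y⟫ + ‖u2 - y‖ ^ 2 := by
    rw [e2, norm_sub_sq_real]
  have hmy : ‖m - y‖ ^ 2
      = (1/2) * ‖u1 - y‖ ^ 2 + (1/2) * ‖u2 - y‖ ^ 2 - (1/4) * ‖u1 - u2‖ ^ 2 := by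
    rw [hA, hB]; ring
  have hhm : h m ≤ (1/2) * h u1 + (1/2) * h u2 := by
    have := hh.2 (Set.mem_univ u1) (Set.mem_univ u2)
      (by norm_num : (0:ℝ) ≤ 1/2) (by norm_num : (0:ℝ) ≤ 1/2) (by norm_num)
    rw [hm]; simpa using this
  have A1 := h1 m
  have A2 := h2 u1
  have : ‖u1 - u2‖ ^ 2 ≤ 0 := by nlinarith
  have : ‖u1 - u2‖ = 0 := by nlinarith [norm_nonneg (u1 - u2)]
  have := norm_sub_eq_zero_iff.mp this
  exact this

/-- (ker A)ᗮ ⊆ range A† in finite dimensions -/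
lemma kkt_adjoint_range [FiniteDimensional ℝ E] [FiniteDimensional ℝ F]
    (A : E →L[ℝ] F) (u : E) (hu : ∀ k, A k = 0 → ⟪u, k⟫ = 0) :
    ∃ Λ : F, ContinuousLinearMap.adjoint A Λ = u := by
  set R : Submodule ℝ E := LinearMap.range (ContinuousLinearMap.adjoint A : F →ₗ[ℝ] E) with hR
  have key : u ∈ Rᗮᗮ := by
    intro z hz
    have hz' : A z = 0 := by
      have h0 : ∀ Λ : F, ⟪Λ, A z⟫ = 0 := by
        intro Λ
        have := hz (ContinuousLinearMap.adjoint A Λ) ⟨Λ, rfl⟩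
        rwa [ContinuousLinearMap.adjoint_inner_left] at this
      exact ext_inner_left ℝ fun Λ => by simpa using h0 Λ
    have := hu z hz'
    rw [real_inner_comm] at this
    exact this
  rw [Submodule.orthogonal_orthogonal] at key
  exact key

/-- Lagrange multiplier existence via Hahn-Banach separation -/
lemma kkt_multiplier [FiniteDimensional ℝ E] (g : E → ℝ) (hgconv : ConvexOn ℝ Set.univ g)
    (hgcont : Continuous g) (A : E →L[ℝ] F) (v : E) (hv : A v = 0)
    (hmin : ∀ w, A w = 0 → g v ≤ g w) :
    ∃ u : E, (∀ k, A k = 0 → ⟪u, k⟫ = 0) ∧ ∀ w, g v + ⟪u, w - v⟫ ≤ g w := by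
  classical
  set G : E → ℝ := fun w => g (v + w) - g v with hG
  have hGnonneg : ∀ k, A k = 0 → 0 ≤ G k := by
    intro k hk
    have : A (v + k) = 0 := by rw [map_add, hv, hk, add_zero]
    have := hmin (v + k) this
    simp only [hG]; linarith
  set O : Set (E × ℝ) := {q | G q.1 < q.2} with hO
  set S : Set (E × ℝ) := {q | A q.1 = 0 ∧ q.2 = 0} with hS
  have hOopen : IsOpen O := by
    have : Continuous fun q : E × ℝ => G q.1 :=
      (hgcont.comp (continuous_const.add continuous_fst)).sub continuous_const
    exact isOpen_lt this continuous_snd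
  have hOconv : Convex ℝ O := by
    intro q1 hq1 q2 hq2 a b ha hb hab
    simp only [hO, Set.mem_setOf_eq] at hq1 hq2 ⊢
    have hmid : G (a • q1.1 + b • q2.1) ≤ a * G q1.1 + b * G q2.1 := by
      have e : v + (a • q1.1 + b • q2.1) = a • (v + q1.1) + b • (v + q2.1) := by
        have : a • (v + q1.1) + b • (v + q2.1) = (a + b) • v + (a • q1.1 + b • q2.1) := by
          module
        rw [this, hab, one_smul]
      have := hgconv.2 (Set.mem_univ (v + q1.1)) (Set.mem_univ (v + q2.1)) ha hb hab
      simp only [hG, smul_eq_mul] at this ⊢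
      rw [e]
      have hgv : a * g v + b * g v = g v := by rw [← add_mul, hab, one_mul]
      nlinarith
    have hstrict : a * G q1.1 + b * G q2.1 < a * q1.2 + b * q2.2 := by
      rcases eq_or_lt_of_le ha with rfl | ha'
      · simp only [zero_mul, zero_add]
        have hb1 : b = 1 := by linarith
        rw [hb1] at *
        nlinarith
      · rcases eq_or_lt_of_le hb with rfl | hb'
        · have ha1 : a = 1 := by linarith
          rw [ha1] at *
          nlinarith
        · nlinarith
    calc G ((a • q1 + b • q2).1) = G (a • q1.1 + b • q2.1) := rfl
    _ ≤ a * G q1.1 + b * G q2.1 := hmid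
    _ < a * q1.2 + b * q2.2 := hstrict
    _ = (a • q1 + b • q2).2 := rfl
  have hSconv : Convex ℝ S := by
    intro q1 hq1 q2 hq2 a b ha hb hab
    simp only [hS, Set.mem_setOf_eq] at hq1 hq2 ⊢
    constructor
    · have : A ((a • q1 + b • q2).1) = a • A q1.1 + b • A q2.1 := by
        simp [map_add, map_smul]
      rw [this, hq1.1, hq2.1, smul_zero, smul_zero, add_zero]
    · have : (a • q1 + b • q2).2 = a * q1.2 + b * q2.2 := rfl
      rw [this, hq1.2, hq2.2, mul_zero, mul_zero, add_zero]
  have hdisj : Disjoint O S := by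
    rw [Set.disjoint_left]
    intro q hqO hqS
    simp only [hO, Set.mem_setOf_eq] at hqO
    simp only [hS, Set.mem_setOf_eq] at hqS
    have := hGnonneg q.1 hqS.1
    rw [hqS.2] at hqO
    linarith
  obtain ⟨f, s, hfO, hfS⟩ := geometric_hahn_banach_open hOconv hOopen hSconv hdisj
  have hs0 : s ≤ 0 := by
    have h00 : ((0 : E), (0 : ℝ)) ∈ S := by simp [hS]
    have := hfS _ h00
    have h0 : f ((0:E), (0:ℝ)) = 0 := map_zero f
    simpa [h0] using this
  have hfS0 : ∀ q ∈ S, f q = 0 := by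
    intro q hq
    by_contra hfq
    have hτ : ∀ τ : ℝ, s ≤ τ * f q := by
      intro τ
      have hmem : τ • q ∈ S := by
        simp only [hS, Set.mem_setOf_eq] at hq ⊢
        constructor
        · have : A ((τ • q).1) = τ • A q.1 := by simp [map_smul]
          rw [this, hq.1, smul_zero]
        · have : (τ • q).2 = τ * q.2 := rfl
          rw [this, hq.2, mul_zero]
      have := hfS _ hmem
      rwa [map_smul, smul_eq_mul] at this
    have := hτ ((s - 1) / f q)
    rw [div_mul_cancel₀ _ hfq] at this
    linarith
  set β : ℝ := f (0, 1) with hβ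
  have hdecomp : ∀ (w : E) (r : ℝ), f (w, r) = f (w, 0) + r * β := by
    intro w r
    have : (w, r) = (w, (0:ℝ)) + r • ((0:E), (1:ℝ)) := by
      simp [Prod.ext_iff]
    rw [this, map_add, map_smul, smul_eq_mul, hβ]
  have hG0 : G 0 = 0 := by simp [hG]
  have hβneg : β < 0 := by
    have : ((0:E), (1:ℝ)) ∈ O := by simp [hO, hG0]
    have := hfO _ this
    linarith
  have hkey : ∀ w : E, f (w, 0) + G w * β ≤ 0 := by
    intro w
    by_contra hT
    push_neg at hT
    set T := f (w, 0) + G w * β with hTdef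
    have hε : ∀ ε : ℝ, 0 < ε → T < ε * (-β) := by
      intro ε hε
      have hmem : (w, G w + ε) ∈ O := by
        simp only [hO, Set.mem_setOf_eq]; linarith
      have := hfO _ hmem
      rw [hdecomp] at this
      have := lt_of_lt_of_le this hs0
      rw [hTdef]; nlinarith
    have hβpos : (0:ℝ) < -β := by linarith
    have h2 := hε (T / (2 * (-β))) (by positivity)
    rw [div_mul_eq_mul_div, mul_comm (2 : ℝ) (-β), ← div_div,
      mul_div_cancel_right₀ _ (by linarith : -β ≠ 0)] at h2
    linarith
  set φ : E →L[ℝ] ℝ := (-β)⁻¹ • (f.comp (ContinuousLinearMap.inl ℝ E ℝ)) with hφ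
  set u : E := (InnerProductSpace.toDual ℝ E).symm φ with hu
  have huw : ∀ w : E, ⟪u, w⟫ = (-β)⁻¹ * f (w, 0) := by
    intro w
    rw [hu, InnerProductSpace.toDual_symm_apply, hφ]
    simp [ContinuousLinearMap.smul_apply]
  refine ⟨u, ?_, ?_⟩
  · intro k hk
    rw [huw]
    have : f (k, 0) = 0 := hfS0 _ (by simp [hS, hk])
    rw [this, mul_zero]
  · intro w
    have hk := hkey (w - v)
    have hβpos : 0 < -β := by linarith
    have h1 : (-β)⁻¹ * f (w - v, 0) ≤ G (w - v) := by
      rw [inv_mul_le_iff₀ hβpos]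
      nlinarith
    have h2 : G (w - v) = g w - g v := by
      simp only [hG, add_sub_cancel]
    rw [huw]
    rw [h2] at h1
    linarith

/-- key algebraic identity relating the prox objective and the Lagrangian -/
lemma kkt_identity [FiniteDimensional ℝ E] [FiniteDimensional ℝ F] (t : ℝ) (ht : 0 < t) (h : E → ℝ) (c x : E)
    (A : E →L[ℝ] F) (g : E → ℝ)
    (hg : ∀ v, g v = (inner ℝ c v : ℝ) + (1 / (2 * t)) * ‖v‖ ^ 2 + h (x + v))
    (Λ : F) (w : E) :
    (1 / 2) * ‖(x + w) - (x - t • (c - (ContinuousLinearMap.adjoint A) Λ))‖ ^ 2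
      + t * h (x + w)
    = t * g w - t * ⟪Λ, A w⟫ + t ^ 2 / 2 * ‖c - (ContinuousLinearMap.adjoint A) Λ‖ ^ 2 := by
  set s : E := c - (ContinuousLinearMap.adjoint A) Λ with hs
  have e1 : (x + w) - (x - t • s) = w + t • s := by module
  have e2 : ‖w + t • s‖ ^ 2 = ‖w‖ ^ 2 + 2 * (t * ⟪w, s⟫) + t ^ 2 * ‖s‖ ^ 2 := by
    rw [norm_add_sq_real, real_inner_smul_right, norm_smul, Real.norm_eq_abs,
      abs_of_pos ht, mul_pow]
  have e3 : ⟪w, s⟫ = ⟪c, w⟫ - ⟪Λ, A w⟫ := by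
    rw [hs, inner_sub_right, ContinuousLinearMap.adjoint_inner_right, real_inner_comm w c,
      real_inner_comm (A w) Λ]
  rw [e1, e2, e3, hg w]
  have ht' : t ≠ 0 := ne_of_gt ht
  field_simp
  ring

end KKTAux

open scoped RealInnerProductSpace


/-- KKT characterization of the minimizer of
`g(v) = ⟨c,v⟩ + (1/(2t))‖v‖² + h(x+v)` over the subspace `ker A`: `v*` is a
minimizer iff there is a Lagrange multiplier `Λ` with
`v* = prox_{th}(x - t(c - A*Λ)) - x` and `A v* = 0`. -/
theorem stmt_17 {d m : ℕ} (t : ℝ) (ht : 0 < t)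
    (h : EuclideanSpace ℝ (Fin d) → ℝ) (hh : ConvexOn ℝ Set.univ h)
    (p : EuclideanSpace ℝ (Fin d) → EuclideanSpace ℝ (Fin d))
    (hp : ∀ y z, (1 / 2) * ‖p y - y‖ ^ 2 + t * h (p y) ≤ (1 / 2) * ‖z - y‖ ^ 2 + t * h z)
    (c x : EuclideanSpace ℝ (Fin d))
    (A : EuclideanSpace ℝ (Fin d) →L[ℝ] EuclideanSpace ℝ (Fin m))
    (g : EuclideanSpace ℝ (Fin d) → ℝ)
    (hg : ∀ v, g v = (inner ℝ c v : ℝ) + (1 / (2 * t)) * ‖v‖ ^ 2 + h (x + v))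
    (v : EuclideanSpace ℝ (Fin d)) :
    (A v = 0 ∧ ∀ w, A w = 0 → g v ≤ g w) ↔
    ∃ Λ : EuclideanSpace ℝ (Fin m),
      v = p (x - t • (c - (ContinuousLinearMap.adjoint A) Λ)) - x ∧ A v = 0 := by
  constructor
  · rintro ⟨hAv, hmin⟩
    have hgconv : ConvexOn ℝ Set.univ g := by
      refine ⟨convex_univ, ?_⟩
      intro w1 _ w2 _ a b ha hb hab
      rw [hg, hg, hg]
      have h1 : (inner ℝ c (a • w1 + b • w2) : ℝ)
          = a * (inner ℝ c w1 : ℝ) + b * (inner ℝ c w2 : ℝ) := by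
        rw [inner_add_right, real_inner_smul_right, real_inner_smul_right]
      have h2 : ‖a • w1 + b • w2‖ ^ 2 ≤ a * ‖w1‖ ^ 2 + b * ‖w2‖ ^ 2 :=
        kkt_normsq_convex a b ha hb hab w1 w2
      have h3 : h (x + (a • w1 + b • w2)) ≤ a * h (x + w1) + b * h (x + w2) := by
        have e : x + (a • w1 + b • w2) = a • (x + w1) + b • (x + w2) := by
          have e' : a • (x + w1) + b • (x + w2) = (a + b) • x + (a • w1 + b • w2) := by
            module
          rw [e', hab, one_smul]
        rw [e]
        have := hh.2 (Set.mem_univ (x + w1)) (Set.mem_univ (x + w2)) ha hb hab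
        simpa [smul_eq_mul] using this
      have hc : (0:ℝ) ≤ 1 / (2 * t) := by positivity
      have h2' : (1 / (2 * t)) * ‖a • w1 + b • w2‖ ^ 2
          ≤ (1 / (2 * t)) * (a * ‖w1‖ ^ 2 + b * ‖w2‖ ^ 2) :=
        mul_le_mul_of_nonneg_left h2 hc
      simp only [smul_eq_mul]
      rw [h1]
      nlinarith
    have hgcont : Continuous g := by
      rw [← continuousOn_univ]
      exact hgconv.continuousOn isOpen_univ
    obtain ⟨u, hu1, hu2⟩ := kkt_multiplier g hgconv hgcont A v hAv hmin
    obtain ⟨Λ, hΛ⟩ := kkt_adjoint_range A u hu1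
    refine ⟨Λ, ?_, hAv⟩
    set y : EuclideanSpace ℝ (Fin d) := x - t • (c - (ContinuousLinearMap.adjoint A) Λ)
      with hy
    have hminF : ∀ z, (1/2) * ‖(x + v) - y‖ ^ 2 + t * h (x + v)
        ≤ (1/2) * ‖z - y‖ ^ 2 + t * h z := by
      intro z
      have hz : x + (z - x) = z := by abel
      rw [← hz, hy]
      rw [kkt_identity t ht h c x A g hg Λ v, kkt_identity t ht h c x A g hg Λ (z - x)]
      have e1 : (⟪Λ, A v⟫ : ℝ) = 0 := by rw [hAv, inner_zero_right]
      have e2 : (⟪Λ, A (z - x)⟫ : ℝ) = ⟪u, z - x⟫ := by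
        rw [← ContinuousLinearMap.adjoint_inner_left, hΛ]
      have e3 : (⟪u, (z - x) - v⟫ : ℝ) = ⟪u, z - x⟫ - ⟪u, v⟫ := inner_sub_right _ _ _
      have e4 : (⟪u, v⟫ : ℝ) = 0 := hu1 v hAv
      have e5 := hu2 (z - x)
      rw [e3, e4, sub_zero] at e5
      rw [e1, e2]
      nlinarith
    have huniq := kkt_uniq t ht h hh y (x + v) (p y) hminF (hp y)
    rw [← huniq]
    abel
  · rintro ⟨Λ, hvp, hAv⟩
    refine ⟨hAv, ?_⟩
    intro w hw
    have hpy : p (x - t • (c - (ContinuousLinearMap.adjoint A) Λ)) = x + v := by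
      rw [hvp]; abel
    have hineq := hp (x - t • (c - (ContinuousLinearMap.adjoint A) Λ)) (x + w)
    rw [hpy] at hineq
    rw [kkt_identity t ht h c x A g hg Λ v, kkt_identity t ht h c x A g hg Λ w] at hineq
    rw [hAv, hw] at hineq
    simp only [inner_zero_right] at hineq
    nlinarith
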